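/- If y ∈ C^{p+1}[0,T] and Y_j^n := (∫_0^1 P_j(s) y(t_n + s h) ds)/(∫_0^1 P_j(s)² ds) are the shifted Legendre coefficients of y on the subinterval (t_n, t_{n+1}] with t_n = nh, then for 0 ≤ j ≤ p, |Y_j^n − γ_j y^{(j)}(t_{n+1/2}) h^j| ≤ h^{M} (2j+1) / (2^{M} M!) · sup_I |y^{(M)}|, where γ_j = j!/(2j)! and M = min{j+2, p+1}. -/

import Mathlib

open Polynomial
open intervalIntegral MeasureTheory Set

/-- The shifted Legendre polynomial of degree n on [0,1], via the Rodrigues formula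
    P_n(s) = (1/n!) dⁿ/dsⁿ (s² − s)ⁿ. -/
noncomputable def shiftedLegendre (n : ℕ) : Polynomial ℝ :=
  (1 / (n.factorial : ℝ)) • (derivative^[n] ((X ^ 2 - X) ^ n))

lemma poly_intble (u : Polynomial ℝ) (a b : ℝ) :
    IntervalIntegrable (fun s => u.eval s) volume a b :=
  (u.continuous).intervalIntegrable a b

lemma poly_ftc (u : Polynomial ℝ) :
    ∫ s in (0:ℝ)..1, (derivative u).eval s = u.eval 1 - u.eval 0 := by
  apply intervalIntegral.integral_eq_sub_of_hasDerivAt (fun x _ => u.hasDerivAt x)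
    (poly_intble (derivative u) 0 1)

lemma poly_ibp (u g : Polynomial ℝ) :
    ∫ s in (0:ℝ)..1, (derivative u).eval s * g.eval s
      = u.eval 1 * g.eval 1 - u.eval 0 * g.eval 0
        - ∫ s in (0:ℝ)..1, u.eval s * (derivative g).eval s := by
  have h := intervalIntegral.integral_deriv_mul_eq_sub_of_hasDerivAt
    (u := fun s => u.eval s) (v := fun s => g.eval s)
    (u' := fun s => (derivative u).eval s) (v' := fun s => (derivative g).eval s)
    (u.continuous.continuousOn) (g.continuous.continuousOn)
    (fun x _ => u.hasDerivAt x) (fun x _ => g.hasDerivAt x)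
    (poly_intble _ 0 1) (poly_intble _ 0 1)
  rw [intervalIntegral.integral_add (f := fun s => (derivative u).eval s * g.eval s)
    (g := fun s => u.eval s * (derivative g).eval s) (((derivative u).continuous.mul g.continuous).intervalIntegrable 0 1)
    ((u.continuous.mul (derivative g).continuous).intervalIntegrable 0 1)] at h
  linarith

lemma iter_deriv_sq_sub_factor (j : ℕ) : ∀ i, i ≤ j →
    ∃ r : Polynomial ℝ, derivative^[i] ((X^2 - X)^j) = (X^2 - X)^(j-i) * r := by
  intro i
  induction i with
  | zero => intro _; exact ⟨1, by simp⟩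
  | succ i ih =>
    intro hij
    obtain ⟨r, hr⟩ := ih (Nat.le_of_succ_le hij)
    obtain ⟨m, hm⟩ : ∃ m, j - i = m + 1 := ⟨j - (i+1), by omega⟩
    refine ⟨(C ((j-i : ℕ) : ℝ)) * (derivative (X^2 - X)) * r + (X^2 - X) * derivative r, ?_⟩
    rw [show j - (i+1) = m by omega, Function.iterate_succ_apply', hr, hm, derivative_mul,
      derivative_pow, Nat.add_sub_cancel]
    ring

lemma iter_deriv_sq_sub_eval0 (j i : ℕ) (h : i < j) :
    (derivative^[i] ((X^2 - X : Polynomial ℝ)^j)).eval 0 = 0 := by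
  obtain ⟨r, hr⟩ := iter_deriv_sq_sub_factor j i h.le
  rw [hr]
  have : j - i ≠ 0 := by omega
  simp [zero_pow this]

lemma iter_deriv_sq_sub_eval1 (j i : ℕ) (h : i < j) :
    (derivative^[i] ((X^2 - X : Polynomial ℝ)^j)).eval 1 = 0 := by
  obtain ⟨r, hr⟩ := iter_deriv_sq_sub_factor j i h.le
  rw [hr]
  have : j - i ≠ 0 := by omega
  simp [zero_pow this]

lemma poly_ibp_iter (m : ℕ) (u : Polynomial ℝ)
    (h0 : ∀ i < m, (derivative^[i] u).eval 0 = 0)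
    (h1 : ∀ i < m, (derivative^[i] u).eval 1 = 0) :
    ∀ g : Polynomial ℝ, ∫ s in (0:ℝ)..1, (derivative^[m] u).eval s * g.eval s
      = (-1)^m * ∫ s in (0:ℝ)..1, u.eval s * (derivative^[m] g).eval s := by
  induction m with
  | zero => intro g; simp
  | succ m ih =>
    intro g
    rw [Function.iterate_succ_apply', poly_ibp (derivative^[m] u) g,
      h0 m (Nat.lt_succ_self m), h1 m (Nat.lt_succ_self m)]
    rw [ih (fun i hi => h0 i (hi.trans (Nat.lt_succ_self m)))
        (fun i hi => h1 i (hi.trans (Nat.lt_succ_self m))) (derivative g)]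
    rw [← Function.iterate_succ_apply, Function.iterate_succ_apply']
    rw [← Function.iterate_succ_apply' derivative m g]
    ring

lemma iter_deriv_sub_pow (a : ℝ) (m : ℕ) : ∀ k,
    derivative^[k] ((X - C a)^m) = (m.descFactorial k : ℝ) • (X - C a)^(m-k) := by
  intro k
  induction k with
  | zero => simp
  | succ k ih =>
    rw [Function.iterate_succ_apply', ih, derivative_smul, derivative_pow,
      Nat.descFactorial_succ]
    rw [derivative_sub, derivative_X, derivative_C, sub_zero]
    rcases le_or_gt m k with hk | hk
    · have h2 : (m - k : ℕ) = 0 := by omega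
      rw [h2]
      simp
    · have h2 : m - k - 1 = m - (k+1) := by omega
      rw [h2, mul_one, smul_eq_C_mul, smul_eq_C_mul, Nat.cast_mul, C_mul]
      ring

lemma beta_nat : ∀ b a : ℕ, ∫ s in (0:ℝ)..1, s^a * (1-s)^b
    = (a.factorial * b.factorial : ℝ) / (a+b+1).factorial := by
  intro b
  induction b with
  | zero =>
    intro a
    simp only [pow_zero, mul_one, integral_pow]
    rw [Nat.factorial_succ]
    push_cast
    field_simp
    simp
  | succ b ih =>
    intro a
    have key := intervalIntegral.integral_deriv_mul_eq_sub_of_hasDerivAt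
      (a := (0:ℝ)) (b := (1:ℝ)) (u := fun s : ℝ => s^(a+1)) (v := fun s : ℝ => (1-s)^(b+1))
      (u' := fun s : ℝ => (a+1 : ℕ) * s^a)
      (v' := fun s : ℝ => ((b+1 : ℕ) * (1-s)^b) * (-1))
      (by fun_prop) (by fun_prop)
      (fun x _ => by simpa using hasDerivAt_pow (a+1) x)
      (fun x _ => by
        have h1 : HasDerivAt (fun s : ℝ => 1 - s) (-1) x := by
          simpa using (hasDerivAt_id x).const_sub 1
        simpa using h1.fun_pow (b+1))
      (by apply Continuous.intervalIntegrable; fun_prop)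
      (by apply Continuous.intervalIntegrable; fun_prop)
    simp only [one_pow, sub_self, zero_pow (Nat.succ_ne_zero a), zero_pow (Nat.succ_ne_zero b),
      mul_zero, zero_mul, sub_zero, one_mul, zero_sub, sub_self] at key
    -- key : ∫ (a+1) s^a (1-s)^(b+1) + s^(a+1) ((b+1)(1-s)^b)(-1) = 0
    rw [intervalIntegral.integral_add
        (by apply Continuous.intervalIntegrable; fun_prop)
        (by apply Continuous.intervalIntegrable; fun_prop)] at key
    have e1 : ∫ s in (0:ℝ)..1, (a+1 : ℕ) * s^a * (1-s)^(b+1)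
        = (a+1 : ℕ) * ∫ s in (0:ℝ)..1, s^a * (1-s)^(b+1) := by
      rw [← intervalIntegral.integral_const_mul]
      congr 1; ext s; ring
    have e2 : ∫ s in (0:ℝ)..1, s^(a+1) * ((b+1 : ℕ) * (1-s)^b * (-1))
        = -((b+1 : ℕ) * ∫ s in (0:ℝ)..1, s^(a+1) * (1-s)^b) := by
      rw [← intervalIntegral.integral_const_mul, ← intervalIntegral.integral_neg]
      congr 1; ext s; ring
    rw [e1, e2, ih (a+1)] at key
    have : ((a+1 : ℕ) : ℝ) * ∫ s in (0:ℝ)..1, s^a * (1-s)^(b+1)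
        = (b+1 : ℕ) * ((a+1).factorial * b.factorial / ((a + 1 + b + 1).factorial)) := by
      push_cast at key ⊢
      linarith
    have ha : ((a+1:ℕ) : ℝ) ≠ 0 := by positivity
    rw [show ∫ s in (0:ℝ)..1, s^a * (1-s)^(b+1)
        = (((b+1:ℕ)) * ((a+1).factorial * b.factorial / ((a + 1 + b + 1).factorial))) / ((a+1:ℕ)) by
      field_simp at this ⊢; linarith]
    rw [show a + (b+1) + 1 = a + 1 + b + 1 by ring, Nat.factorial_succ (a),
      Nat.factorial_succ b]
    push_cast
    have h2 : ((a + 1 + b + 1).factorial : ℝ) ≠ 0 := by positivity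
    field_simp

lemma monic_sq_sub : ((X^2 - X : Polynomial ℝ)).Monic := by
  have := Polynomial.monic_X_pow_sub (p := (X : Polynomial ℝ)) (n := 2)
    (by rw [degree_X]; norm_num)
  simpa using this

lemma int_Q (j : ℕ) : ∫ s in (0:ℝ)..1, ((X^2 - X : Polynomial ℝ)^j).eval s
    = (-1)^j * ((j.factorial : ℝ) * j.factorial / (2*j+1).factorial) := by
  have hcong : ∀ s : ℝ, ((X^2 - X : Polynomial ℝ)^j).eval s = (-1)^j * (s^j * (1-s)^j) := by
    intro s
    simp only [eval_pow, eval_sub, eval_X, eval_pow]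
    rw [show (s^2 - s) = (-1) * (s * (1-s)) by ring, mul_pow, mul_pow]
  calc ∫ s in (0:ℝ)..1, ((X^2 - X : Polynomial ℝ)^j).eval s
      = ∫ s in (0:ℝ)..1, (-1:ℝ)^j * (s^j * (1-s)^j) := by
        apply intervalIntegral.integral_congr; intro s _; exact hcong s
    _ = (-1:ℝ)^j * ∫ s in (0:ℝ)..1, s^j * (1-s)^j := intervalIntegral.integral_const_mul _ _
    _ = (-1)^j * ((j.factorial : ℝ) * j.factorial / (2*j+1).factorial) := by
        rw [beta_nat j j]; norm_num [two_mul]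

lemma eval_shiftedLegendre (j : ℕ) (s : ℝ) :
    (_root_.shiftedLegendre j).eval s = (1 / (j.factorial : ℝ)) * (derivative^[j] ((X^2 - X)^j)).eval s := by
  rw [_root_.shiftedLegendre, smul_eq_C_mul, eval_mul, eval_C]

lemma legendre_int (j : ℕ) (g : Polynomial ℝ) :
    ∫ s in (0:ℝ)..1, (_root_.shiftedLegendre j).eval s * g.eval s
      = (1 / (j.factorial : ℝ)) * (-1)^j
        * ∫ s in (0:ℝ)..1, ((X^2 - X : Polynomial ℝ)^j).eval s * (derivative^[j] g).eval s := by
  have e : ∀ s : ℝ, (_root_.shiftedLegendre j).eval s * g.eval s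
      = (1 / (j.factorial : ℝ)) * ((derivative^[j] ((X^2 - X)^j)).eval s * g.eval s) := by
    intro s; rw [eval_shiftedLegendre]; ring
  calc ∫ s in (0:ℝ)..1, (_root_.shiftedLegendre j).eval s * g.eval s
      = ∫ s in (0:ℝ)..1, (1 / (j.factorial : ℝ)) * ((derivative^[j] ((X^2 - X)^j)).eval s * g.eval s) := by
        apply intervalIntegral.integral_congr; intro s _; exact e s
    _ = (1 / (j.factorial : ℝ)) * ∫ s in (0:ℝ)..1, (derivative^[j] ((X^2 - X)^j)).eval s * g.eval s :=
        intervalIntegral.integral_const_mul _ _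
    _ = _ := by
        rw [poly_ibp_iter j _ (fun i hi => iter_deriv_sq_sub_eval0 j i hi)
          (fun i hi => iter_deriv_sq_sub_eval1 j i hi) g]
        ring

/-- I2 : orthogonality to lower-degree centered monomials -/
lemma legendre_orth_lt (j k : ℕ) (hk : k < j) :
    ∫ s in (0:ℝ)..1, (_root_.shiftedLegendre j).eval s * ((X - C (1/2 : ℝ))^k).eval s = 0 := by
  rw [legendre_int, iter_deriv_sub_pow]
  have : (k.descFactorial j : ℝ) = 0 := by
    rw [Nat.descFactorial_eq_zero_iff_lt.mpr hk]; simp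
  simp [this]

/-- I3 : the diagonal term -/
lemma legendre_diag (j : ℕ) :
    ∫ s in (0:ℝ)..1, (_root_.shiftedLegendre j).eval s * ((X - C (1/2 : ℝ))^j).eval s
      = (j.factorial : ℝ) * j.factorial / (2*j+1).factorial := by
  rw [legendre_int, iter_deriv_sub_pow]
  simp only [Nat.sub_self, pow_zero, Nat.descFactorial_self]
  have e : ∀ s : ℝ, ((X^2 - X : Polynomial ℝ)^j).eval s * ((j.factorial : ℝ) • (1:Polynomial ℝ)).eval s
      = (j.factorial : ℝ) * ((X^2 - X : Polynomial ℝ)^j).eval s := by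
    intro s; simp [smul_eq_C_mul]; ring
  rw [intervalIntegral.integral_congr (g := fun s => (j.factorial : ℝ) * ((X^2 - X : Polynomial ℝ)^j).eval s)
    (fun s _ => e s), intervalIntegral.integral_const_mul, int_Q]
  have h1 : ((j.factorial : ℝ)) ≠ 0 := by positivity
  have h2 : ((-1:ℝ))^j * (-1:ℝ)^j = 1 := by
    rw [← pow_add]; exact (neg_one_pow_eq_one_iff_even (by norm_num)).mpr ⟨j, rfl⟩
  field_simp
  ring_nf
  simp [pow_mul, neg_one_sq]
  exact neg_one_pow_eq_or ℝ j

lemma int_Q_half (j : ℕ) :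
    ∫ s in (0:ℝ)..1, ((X^2 - X : Polynomial ℝ)^j).eval s * (s - 1/2) = 0 := by
  have hftc := poly_ftc ((X^2 - X : Polynomial ℝ)^(j+1))
  have hz : ((X^2 - X : Polynomial ℝ)^(j+1)).eval 0 = 0 := by simp
  have ho : ((X^2 - X : Polynomial ℝ)^(j+1)).eval 1 = 0 := by norm_num
  rw [hz, ho, sub_zero] at hftc
  have he : ∀ s : ℝ, (derivative ((X^2 - X : Polynomial ℝ)^(j+1))).eval s
      = (2*(j:ℝ)+2) * (((X^2 - X : Polynomial ℝ)^j).eval s * (s - 1/2)) := by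
    intro s
    rw [derivative_pow, Nat.add_sub_cancel]
    simp only [eval_mul, eval_C, eval_pow, eval_sub, eval_X, eval_one, derivative_sub,
      derivative_X, derivative_X_pow]
    push_cast
    ring
  rw [intervalIntegral.integral_congr (g := fun s =>
      (2*(j:ℝ)+2) * (((X^2 - X : Polynomial ℝ)^j).eval s * (s - 1/2))) (fun s _ => he s),
    intervalIntegral.integral_const_mul] at hftc
  have : (2*(j:ℝ)+2) ≠ 0 := by positivity
  exact (mul_eq_zero.mp hftc).resolve_left this

lemma legendre_orth_succ (j : ℕ) :
    ∫ s in (0:ℝ)..1, (_root_.shiftedLegendre j).eval s * ((X - C (1/2 : ℝ))^(j+1)).eval s = 0 := by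
  rw [legendre_int, iter_deriv_sub_pow]
  have he : ∀ s : ℝ, ((X^2 - X : Polynomial ℝ)^j).eval s
        * ((((j+1).descFactorial j : ℕ) : ℝ) • ((X - C (1/2:ℝ))^(j+1-j))).eval s
      = (((j+1).descFactorial j : ℕ) : ℝ) * (((X^2 - X : Polynomial ℝ)^j).eval s * (s - 1/2)) := by
    intro s
    rw [Nat.add_sub_cancel_left] -- j+1-j = 1?
    simp [smul_eq_C_mul]
    ring
  rw [intervalIntegral.integral_congr (g := fun s => (((j+1).descFactorial j : ℕ) : ℝ)
      * (((X^2 - X : Polynomial ℝ)^j).eval s * (s - 1/2))) (fun s _ => he s),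
    intervalIntegral.integral_const_mul, int_Q_half]
  simp

lemma natDegree_Q (j : ℕ) : ((X^2 - X : Polynomial ℝ)^j).natDegree = 2*j := by
  rw [monic_sq_sub.natDegree_pow]
  have : (X^2 - X : Polynomial ℝ).natDegree = 2 := by compute_degree!
  rw [this]; ring

lemma iter_deriv_Q_top (j : ℕ) :
    derivative^[2*j] ((X^2 - X : Polynomial ℝ)^j) = C (((2*j).factorial : ℝ)) := by
  apply Polynomial.ext
  intro n
  rw [Polynomial.coeff_iterate_derivative]
  cases n with
  | zero =>
    rw [zero_add, Nat.descFactorial_self, coeff_C]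
    have : ((X^2 - X : Polynomial ℝ)^j).coeff (2*j) = 1 := by
      have := (monic_sq_sub.pow j)
      rw [← natDegree_Q j]
      exact this
    rw [this]
    simp
  | succ n =>
    have hlt : ((X^2 - X : Polynomial ℝ)^j).natDegree < n + 1 + 2*j := by
      rw [natDegree_Q]; omega
    rw [Polynomial.coeff_eq_zero_of_natDegree_lt hlt, coeff_C]
    simp

lemma iter_deriv_legendre (j : ℕ) :
    derivative^[j] (_root_.shiftedLegendre j) = C (((2*j).factorial : ℝ) / j.factorial) := by
  rw [_root_.shiftedLegendre, Polynomial.iterate_derivative_smul,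
    ← Function.iterate_add_apply, show j + j = 2*j by ring, iter_deriv_Q_top]
  rw [smul_C]
  congr 1
  rw [smul_eq_mul]
  ring

lemma legendre_sq_int (j : ℕ) :
    ∫ s in (0:ℝ)..1, ((_root_.shiftedLegendre j).eval s)^2 = 1/(2*(j:ℝ)+1) := by
  have he : ∀ s : ℝ, ((_root_.shiftedLegendre j).eval s)^2
      = (_root_.shiftedLegendre j).eval s * (_root_.shiftedLegendre j).eval s := fun s => sq _
  rw [intervalIntegral.integral_congr (g := fun s =>
      (_root_.shiftedLegendre j).eval s * (_root_.shiftedLegendre j).eval s) (fun s _ => he s)]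
  rw [legendre_int j (_root_.shiftedLegendre j), iter_deriv_legendre]
  have he2 : ∀ s : ℝ, ((X^2 - X : Polynomial ℝ)^j).eval s * (C (((2*j).factorial : ℝ) / j.factorial)).eval s
      = (((2*j).factorial : ℝ) / j.factorial) * ((X^2 - X : Polynomial ℝ)^j).eval s := by
    intro s; rw [eval_C]; ring
  rw [intervalIntegral.integral_congr (g := fun s => (((2*j).factorial : ℝ) / j.factorial)
      * ((X^2 - X : Polynomial ℝ)^j).eval s) (fun s _ => he2 s),
    intervalIntegral.integral_const_mul, int_Q]
  have h1 : ((j.factorial : ℝ)) ≠ 0 := by positivity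
  have h3 : (((2*j).factorial : ℝ)) ≠ 0 := by positivity
  have h4 : (((2*j+1).factorial : ℝ)) = (2*(j:ℝ)+1) * ((2*j).factorial : ℝ) := by
    rw [Nat.factorial_succ]; push_cast; ring
  have h5 : (2*(j:ℝ)+1) ≠ 0 := by positivity
  field_simp [h4]
  ring_nf
  rw [show ((-1:ℝ))^(j*2) = 1 by rw [pow_mul']; norm_num]
  ring
  rw [show 1 + j*2 = 2*j+1 by ring, h4, show j*2 = 2*j by ring]
  ring

lemma taylor_bound_two_sided {f : ℝ → ℝ} {a b C x c : ℝ} {m : ℕ} (hab : a < b)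
    (hf : ContDiffOn ℝ (m+1) f (Icc a b)) (hc : c ∈ Icc a b) (hx : x ∈ Icc a b)
    (hC : ∀ u ∈ Icc a b, |iteratedDerivWithin (m+1) f (Icc a b) u| ≤ C) :
    |f x - taylorWithinEval f m (Icc a b) c x| ≤ C * |x - c|^(m+1) / m.factorial := by
  have hf' : DifferentiableOn ℝ (iteratedDerivWithin m f (Icc a b)) (Icc a b) :=
    hf.differentiableOn_iteratedDerivWithin (mod_cast m.lt_succ_self) (uniqueDiffOn_Icc hab)
  have hC0 : 0 ≤ C := le_trans (abs_nonneg _) (hC c hc)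
  rcases le_or_gt c x with hcx | hcx
  · -- c ≤ x : apply MVT on [c, x]
    have hsub : Icc c x ⊆ Icc a b := Icc_subset_Icc hc.1 hx.2
    have A : ∀ t ∈ Icc c x, HasDerivWithinAt (fun u => taylorWithinEval f m (Icc a b) u x)
        (((m.factorial : ℝ)⁻¹ * (x - t) ^ m) • iteratedDerivWithin (m + 1) f (Icc a b) t)
        (Icc c x) t := fun t ht =>
      (hasDerivWithinAt_taylorWithinEval_at_Icc x hab (hsub ht) hf.of_succ hf').mono hsub
    have bound : ∀ t ∈ Ico c x,
        ‖((m.factorial : ℝ)⁻¹ * (x - t) ^ m) • iteratedDerivWithin (m + 1) f (Icc a b) t‖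
          ≤ (m.factorial : ℝ)⁻¹ * (x - c)^m * C := by
      intro t ht
      rw [norm_smul]
      have h1 : ‖((m.factorial : ℝ)⁻¹ * (x - t) ^ m)‖ ≤ (m.factorial : ℝ)⁻¹ * (x - c)^m := by
        rw [Real.norm_eq_abs, abs_mul, abs_pow, abs_of_nonneg (by positivity : (0:ℝ) ≤ ((m.factorial : ℝ))⁻¹)]
        gcongr
        rw [abs_of_nonneg (by linarith [ht.2] : (0:ℝ) ≤ x - t)]
        linarith [ht.1]
      calc _ ≤ ((m.factorial : ℝ)⁻¹ * (x - c)^m) * ‖iteratedDerivWithin (m + 1) f (Icc a b) t‖ := by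
              apply mul_le_mul_of_nonneg_right h1 (norm_nonneg _)
        _ ≤ (m.factorial : ℝ)⁻¹ * (x - c)^m * C := by
              apply mul_le_mul_of_nonneg_left _
                (mul_nonneg (by positivity) (pow_nonneg (by linarith) _))
              rw [Real.norm_eq_abs]
              exact hC t (hsub (Ico_subset_Icc_self ht))
    have key := norm_image_sub_le_of_norm_deriv_le_segment' A bound x (right_mem_Icc.2 hcx)
    rw [taylorWithinEval_self] at key
    rw [← Real.norm_eq_abs, norm_sub_rev]
    calc ‖taylorWithinEval f m (Icc a b) c x - f x‖
        = ‖f x - taylorWithinEval f m (Icc a b) c x‖ := norm_sub_rev _ _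
      _ ≤ (m.factorial : ℝ)⁻¹ * (x - c)^m * C * (x - c) := key
      _ = C * |x - c|^(m+1) / m.factorial := by
          rw [abs_of_nonneg (by linarith : (0:ℝ) ≤ x - c)]
          field_simp
          ring
  · -- x < c : apply MVT on [x, c]
    have hsub : Icc x c ⊆ Icc a b := Icc_subset_Icc hx.1 hc.2
    have A : ∀ t ∈ Icc x c, HasDerivWithinAt (fun u => taylorWithinEval f m (Icc a b) u x)
        (((m.factorial : ℝ)⁻¹ * (x - t) ^ m) • iteratedDerivWithin (m + 1) f (Icc a b) t)
        (Icc x c) t := fun t ht =>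
      (hasDerivWithinAt_taylorWithinEval_at_Icc x hab (hsub ht) hf.of_succ hf').mono hsub
    have bound : ∀ t ∈ Ico x c,
        ‖((m.factorial : ℝ)⁻¹ * (x - t) ^ m) • iteratedDerivWithin (m + 1) f (Icc a b) t‖
          ≤ (m.factorial : ℝ)⁻¹ * (c - x)^m * C := by
      intro t ht
      rw [norm_smul]
      have h1 : ‖((m.factorial : ℝ)⁻¹ * (x - t) ^ m)‖ ≤ (m.factorial : ℝ)⁻¹ * (c - x)^m := by
        rw [Real.norm_eq_abs, abs_mul, abs_pow, abs_of_nonneg (by positivity : (0:ℝ) ≤ ((m.factorial : ℝ))⁻¹)]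
        gcongr
        rw [abs_sub_comm, abs_of_nonneg (by linarith [ht.1] : (0:ℝ) ≤ t - x)]
        linarith [ht.2]
      calc _ ≤ ((m.factorial : ℝ)⁻¹ * (c - x)^m) * ‖iteratedDerivWithin (m + 1) f (Icc a b) t‖ := by
              apply mul_le_mul_of_nonneg_right h1 (norm_nonneg _)
        _ ≤ (m.factorial : ℝ)⁻¹ * (c - x)^m * C := by
              apply mul_le_mul_of_nonneg_left _
                (mul_nonneg (by positivity) (pow_nonneg (by linarith) _))
              rw [Real.norm_eq_abs]
              exact hC t (hsub (Ico_subset_Icc_self ht))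
    have key := norm_image_sub_le_of_norm_deriv_le_segment' A bound c (right_mem_Icc.2 hcx.le)
    rw [taylorWithinEval_self] at key
    rw [← Real.norm_eq_abs, norm_sub_rev]
    calc ‖taylorWithinEval f m (Icc a b) c x - f x‖
        ≤ (m.factorial : ℝ)⁻¹ * (c - x)^m * C * (c - x) := key
      _ = C * |x - c|^(m+1) / m.factorial := by
          rw [abs_sub_comm, abs_of_nonneg (by linarith : (0:ℝ) ≤ c - x)]
          field_simp
          ring

set_option maxHeartbeats 2000000 in
/-- bound on the shifted Legendre coefficients of a C^{p+1} function on a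
    subinterval (t_n, t_{n+1}], t_n = nh, h = T/N:
    |Y_j^n − γ_j y^{(j)}(t_{n+1/2}) h^j| ≤ h^M (2j+1)/(2^M M!) · sup|y^{(M)}|,
    γ_j = j!/(2j)!, M = min{j+2, p+1}. -/
theorem legendre_coefficient_bound (T : ℝ) (hT : 0 < T) (N : ℕ) (hN : 2 ≤ N)
    (h : ℝ) (hh : h = T / N) (p : ℕ) (y : ℝ → ℝ)
    (hy : ContDiffOn ℝ (p + 1) y (Set.Icc 0 T))
    (n : ℕ) (hn : n < N) (j : ℕ) (hj : j ≤ p)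
    (B : ℝ)
    (hB : ∀ t ∈ Set.Icc (0 : ℝ) T,
      |iteratedDerivWithin (min (j + 2) (p + 1)) y (Set.Icc 0 T) t| ≤ B) :
    |(∫ s in (0:ℝ)..1, (_root_.shiftedLegendre j).eval s * y ((n : ℝ) * h + s * h))
        / (∫ s in (0:ℝ)..1, ((_root_.shiftedLegendre j).eval s) ^ 2)
      - ((j.factorial : ℝ) / ((2 * j).factorial : ℝ))
          * iteratedDerivWithin j y (Set.Icc 0 T) (((n : ℝ) + 1 / 2) * h) * h ^ j|
      ≤ h ^ (min (j + 2) (p + 1)) * (2 * (j : ℝ) + 1)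
          / (2 ^ (min (j + 2) (p + 1)) * ((min (j + 2) (p + 1)).factorial : ℝ)) * B := by
  -- basic setup
  set m : ℕ := min (j + 1) p with hm
  have hMm : min (j + 2) (p + 1) = m + 1 := by omega
  have hjm : j ≤ m := by omega
  have hmj : m ≤ j + 1 := by omega
  have hNpos : (0:ℝ) < (N:ℝ) := by positivity
  have hh0 : 0 < h := by rw [hh]; positivity
  have hNh : (N:ℝ) * h = T := by rw [hh]; field_simp
  set c : ℝ := ((n : ℝ) + 1 / 2) * h with hc
  have hcmem : c ∈ Icc (0:ℝ) T := by
    constructor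
    · positivity
    · rw [← hNh]
      have : (n:ℝ) + 1/2 ≤ (N:ℝ) := by
        have : (n:ℝ) + 1 ≤ (N:ℝ) := by exact_mod_cast hn
        linarith
      nlinarith
  have hmem : ∀ s ∈ Icc (0:ℝ) 1, (n : ℝ) * h + s * h ∈ Icc (0:ℝ) T := by
    intro s hs
    constructor
    · have := hs.1; positivity
    · rw [← hNh]
      have h1 : (n:ℝ) + 1 ≤ (N:ℝ) := by exact_mod_cast hn
      nlinarith [hs.2]
  have hB0 : 0 ≤ B := le_trans (abs_nonneg _) (hB c hcmem)
  -- smoothness downgrade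
  have hy' : ContDiffOn ℝ ((m+1 : ℕ) : ℕ∞) y (Set.Icc 0 T) := by
    apply hy.of_le
    have : m + 1 ≤ p + 1 := by omega
    exact_mod_cast this
  rw [hMm] at hB
  -- notation
  set P : ℝ → ℝ := fun s => (_root_.shiftedLegendre j).eval s with hP
  set d : ℕ → ℝ := fun k => iteratedDerivWithin k y (Set.Icc 0 T) c with hd
  set Tay : ℝ → ℝ := fun x => taylorWithinEval y m (Set.Icc 0 T) c x with hTay
  set R : ℝ → ℝ := fun s => y ((n : ℝ) * h + s * h) - Tay ((n : ℝ) * h + s * h) with hR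
  -- Taylor remainder bound
  have hRbound : ∀ s ∈ Icc (0:ℝ) 1,
      |R s| ≤ (B * h^(m+1) / m.factorial) * |s - 1/2|^(m+1) := by
    intro s hs
    have hx := hmem s hs
    have key := taylor_bound_two_sided (f := y) (a := 0) (b := T) (C := B)
      (x := (n : ℝ) * h + s * h) (c := c) (m := m) hT hy' hcmem hx hB
    have harg : (n : ℝ) * h + s * h - c = (s - 1/2) * h := by rw [hc]; ring
    calc |R s| ≤ B * |(n : ℝ) * h + s * h - c|^(m+1) / m.factorial := key
      _ = (B * h^(m+1) / m.factorial) * |s - 1/2|^(m+1) := by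
          rw [harg, abs_mul, mul_pow, abs_of_pos hh0]
          ring
  -- continuity facts
  have hIcc : uIcc (0:ℝ) 1 = Icc 0 1 := uIcc_of_le zero_le_one
  have hPcont : Continuous P := (_root_.shiftedLegendre j).continuous
  have hycont : ContinuousOn (fun s : ℝ => y ((n : ℝ) * h + s * h)) (Icc 0 1) := by
    apply hy.continuousOn.comp (by fun_prop) hmem
  have hTayeq : Tay = fun x => ∑ k ∈ Finset.range (m+1),
      ((k.factorial : ℝ)⁻¹ * (x - c)^k) * d k := by
    funext x
    show taylorWithinEval y m (Set.Icc 0 T) c x = _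
    rw [taylor_within_apply]
    simp [smul_eq_mul]
    rfl
  have hTaycont : Continuous Tay := by
    rw [hTayeq]
    apply continuous_finset_sum
    intro k _
    exact (continuous_const.mul ((continuous_id.sub continuous_const).pow k)).mul
      continuous_const
  have hRcont : ContinuousOn R (Icc 0 1) := by
    apply ContinuousOn.sub hycont
    exact (hTaycont.comp (by fun_prop)).continuousOn
  have haff : Continuous fun s : ℝ => (n:ℝ)*h + s*h := by fun_prop
  have intble : ∀ {f : ℝ → ℝ}, ContinuousOn f (Icc 0 1) → IntervalIntegrable f volume 0 1 := by
    intro f hf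
    apply ContinuousOn.intervalIntegrable
    rw [hIcc]
    exact hf
  -- value of Taylor-part integral
  have hTayint : ∫ s in (0:ℝ)..1, P s * Tay ((n : ℝ) * h + s * h)
      = (j.factorial : ℝ) * h^j * d j / (2*j+1).factorial := by
    have he : ∀ s : ℝ, P s * Tay ((n : ℝ) * h + s * h)
        = ∑ k ∈ Finset.range (m+1),
            ((k.factorial : ℝ)⁻¹ * h^k * d k) * (P s * ((X - C (1/2 : ℝ))^k).eval s) := by
      intro s
      rw [hTayeq]
      rw [Finset.mul_sum]
      apply Finset.sum_congr rfl
      intro k _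
      have harg : (n : ℝ) * h + s * h - c = (s - 1/2) * h := by rw [hc]; ring
      rw [harg]
      simp only [eval_pow, eval_sub, eval_X, eval_C, mul_pow]
      ring
    rw [intervalIntegral.integral_congr (g := fun s => ∑ k ∈ Finset.range (m+1),
        ((k.factorial : ℝ)⁻¹ * h^k * d k) * (P s * ((X - C (1/2 : ℝ))^k).eval s)) (fun s _ => he s)]
    rw [intervalIntegral.integral_finset_sum (fun k _ => by
      apply Continuous.intervalIntegrable
      exact continuous_const.mul (hPcont.mul ((X - Polynomial.C (1/2:ℝ))^k).continuous))]
    have hval : ∀ k ∈ Finset.range (m+1),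
        (∫ s in (0:ℝ)..1, ((k.factorial : ℝ)⁻¹ * h^k * d k) * (P s * ((X - C (1/2 : ℝ))^k).eval s))
        = if k = j then (j.factorial : ℝ)⁻¹ * h^j * d j * ((j.factorial : ℝ) * j.factorial / (2*j+1).factorial) else 0 := by
      intro k hk
      rw [intervalIntegral.integral_const_mul]
      rcases lt_trichotomy k j with hkj | hkj | hkj
      · rw [legendre_orth_lt j k hkj, if_neg hkj.ne]; ring
      · rw [hkj, legendre_diag j, if_pos rfl]
      · have hk1 : k = j + 1 := by
          simp only [Finset.mem_range] at hk
          omega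
        subst hk1
        rw [legendre_orth_succ j, if_neg (by omega)]; ring
    rw [Finset.sum_congr rfl hval, Finset.sum_ite_eq' (Finset.range (m+1)) j]
    rw [if_pos (by simp only [Finset.mem_range]; omega)]
    have : (j.factorial : ℝ) ≠ 0 := by positivity
    field_simp
  -- split the main integral
  set E : ℝ := ∫ s in (0:ℝ)..1, P s * R s with hE
  have hsplit : ∫ s in (0:ℝ)..1, P s * y ((n : ℝ) * h + s * h)
      = (j.factorial : ℝ) * h^j * d j / (2*j+1).factorial + E := by
    calc ∫ s in (0:ℝ)..1, P s * y ((n : ℝ) * h + s * h)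
        = ∫ s in (0:ℝ)..1, (P s * Tay ((n : ℝ) * h + s * h) + P s * R s) := by
          apply intervalIntegral.integral_congr
          intro s _
          show P s * y ((n : ℝ) * h + s * h) = _
          simp only [hR]
          ring
      _ = (∫ s in (0:ℝ)..1, P s * Tay ((n : ℝ) * h + s * h)) + ∫ s in (0:ℝ)..1, P s * R s := by
          apply intervalIntegral.integral_add
            (intble ((hPcont.continuousOn).mul ((hTaycont.comp haff)).continuousOn))
            (intble ((hPcont.continuousOn).mul hRcont))
      _ = (j.factorial : ℝ) * h^j * d j / (2*j+1).factorial + E := by rw [hTayint]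
  -- the goal reduces to bounding (2j+1) * E
  have hfac : ((2*j+1).factorial : ℝ) = (2*(j:ℝ)+1) * ((2*j).factorial : ℝ) := by
    rw [Nat.factorial_succ]; push_cast; ring
  have hlhs : (∫ s in (0:ℝ)..1, P s * y ((n : ℝ) * h + s * h))
        / (∫ s in (0:ℝ)..1, (P s) ^ 2)
      - ((j.factorial : ℝ) / ((2 * j).factorial : ℝ)) * d j * h ^ j
      = (2*(j:ℝ)+1) * E := by
    rw [hsplit, legendre_sq_int j]
    have h2j : (2*(j:ℝ)+1) ≠ 0 := by positivity
    have h2jf : ((2*j).factorial : ℝ) ≠ 0 := by positivity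
    rw [div_eq_mul_inv _ (1/(2*(j:ℝ)+1)), one_div, inv_inv, hfac]
    field_simp
    ring
  rw [hlhs, hMm]
  -- Cauchy-Schwarz step
  have hPsq : ∫ s in (0:ℝ)..1, (P s)^2 = 1/(2*(j:ℝ)+1) := legendre_sq_int j
  have hCS : (2*(j:ℝ)+1) * E^2 ≤ ∫ s in (0:ℝ)..1, (R s)^2 := by
    set t : ℝ := (2*(j:ℝ)+1) * E with ht
    have hnn : 0 ≤ ∫ s in (0:ℝ)..1, (t * P s - R s)^2 := by
      apply intervalIntegral.integral_nonneg zero_le_one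
      intro s _; positivity
    have hexp : ∫ s in (0:ℝ)..1, (t * P s - R s)^2
        = t^2 * (∫ s in (0:ℝ)..1, (P s)^2) - 2*t*E + ∫ s in (0:ℝ)..1, (R s)^2 := by
      rw [intervalIntegral.integral_congr (g := fun s =>
          t^2 * (P s)^2 - 2*t*(P s * R s) + (R s)^2) (fun s _ => by ring)]
      rw [intervalIntegral.integral_add (f := fun s => t^2 * (P s)^2 - 2*t*(P s * R s))
          (g := fun s => (R s)^2) (IntervalIntegrable.sub
          (by apply Continuous.intervalIntegrable; exact continuous_const.mul (hPcont.pow 2))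
          ((intble ((hPcont.continuousOn).mul hRcont)).const_mul _))
        (intble (hRcont.pow 2))]
      rw [intervalIntegral.integral_sub (f := fun s => t^2 * (P s)^2) (g := fun s => 2*t*(P s * R s))
          (by apply Continuous.intervalIntegrable; exact continuous_const.mul (hPcont.pow 2))
          ((intble ((hPcont.continuousOn).mul hRcont)).const_mul _)]
      rw [intervalIntegral.integral_const_mul, intervalIntegral.integral_const_mul, ← hE]
    rw [hexp, hPsq, ht] at hnn
    have h2j : (2*(j:ℝ)+1) ≠ 0 := by positivity
    have : ((2*(j:ℝ)+1) * E)^2 * (1/(2*(j:ℝ)+1)) = (2*(j:ℝ)+1) * E^2 := by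
      field_simp
    nlinarith [hnn]
  -- bound on ∫ R²
  have hcent : ∫ s in (0:ℝ)..1, (s - (1/2:ℝ))^(2*(m+1))
      = ((1/2:ℝ))^(2*(m+1)) / (2*(m+1)+1) := by
    rw [show (fun s : ℝ => (s - (1/2:ℝ))^(2*(m+1))) = fun s : ℝ => (s - (1/2:ℝ))^(2*(m+1)) from rfl]
    rw [intervalIntegral.integral_comp_sub_right (fun u => u^(2*(m+1))) (1/2)]
    rw [integral_pow]
    have hodd : ((0:ℝ) - 1/2)^(2*(m+1)+1) = -((1/2:ℝ))^(2*(m+1)+1) := by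
      rw [show ((0:ℝ) - 1/2) = -(1/2 : ℝ) by ring, Odd.neg_pow ⟨m+1, by ring⟩]
    rw [show ((1:ℝ) - 1/2) = (1/2 : ℝ) by ring, hodd]
    push_cast
    field_simp
    ring
  have hR2 : ∫ s in (0:ℝ)..1, (R s)^2
      ≤ (B * h^(m+1) / m.factorial)^2 * (((1/2:ℝ))^(2*(m+1)) / (2*(m+1)+1)) := by
    have step : ∫ s in (0:ℝ)..1, (R s)^2
        ≤ ∫ s in (0:ℝ)..1, (B * h^(m+1) / m.factorial)^2 * (s - 1/2)^(2*(m+1)) := by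
      apply intervalIntegral.integral_mono_on zero_le_one (intble (hRcont.pow 2))
        (Continuous.intervalIntegrable (continuous_const.mul
          ((continuous_id.sub continuous_const).pow (2*(m+1)))) _ _)
      intro s hs
      have h1 := hRbound s hs
      have h2 : (R s)^2 ≤ ((B * h^(m+1) / m.factorial) * |s - 1/2|^(m+1))^2 := by
        rw [← sq_abs (R s)]
        exact pow_le_pow_left₀ (abs_nonneg _) h1 _
      calc (R s)^2 ≤ ((B * h^(m+1) / m.factorial) * |s - 1/2|^(m+1))^2 := h2
        _ = (B * h^(m+1) / m.factorial)^2 * (s - 1/2)^(2*(m+1)) := by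
            rw [mul_pow, ← pow_mul, show (m+1)*2 = 2*(m+1) by ring, pow_mul, pow_mul, sq_abs]
    calc ∫ s in (0:ℝ)..1, (R s)^2
        ≤ ∫ s in (0:ℝ)..1, (B * h^(m+1) / m.factorial)^2 * (s - 1/2)^(2*(m+1)) := step
      _ = (B * h^(m+1) / m.factorial)^2 * ∫ s in (0:ℝ)..1, (s - 1/2)^(2*(m+1)) :=
          intervalIntegral.integral_const_mul _ _
      _ = (B * h^(m+1) / m.factorial)^2 * (((1/2:ℝ))^(2*(m+1)) / (2*(m+1)+1)) := by
          rw [hcent]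
  -- final arithmetic
  set RHS : ℝ := h ^ (m+1) * (2 * (j : ℝ) + 1) / (2 ^ (m+1) * ((m+1).factorial : ℝ)) * B with hRHS
  have hRHS0 : 0 ≤ RHS := by positivity
  have hsq : ((2*(j:ℝ)+1) * |E|)^2 ≤ RHS^2 := by
    have e1 : ((2*(j:ℝ)+1) * |E|)^2 = (2*(j:ℝ)+1) * ((2*(j:ℝ)+1) * E^2) := by
      rw [mul_pow, sq_abs]; ring
    have hkey : (2*(j:ℝ)+1) * ((B * h^(m+1) / m.factorial)^2 * (((1/2:ℝ))^(2*(m+1)) / (2*((m:ℝ)+1)+1)))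
        ≤ RHS^2 := by
      have hfacm : ((m+1).factorial : ℝ) = ((m:ℝ)+1) * (m.factorial : ℝ) := by
        rw [Nat.factorial_succ]; push_cast; ring
      have hmf : (m.factorial : ℝ) ≠ 0 := by positivity
      have hineq : ((m:ℝ)+1)^2 ≤ (2*(j:ℝ)+1) * (2*((m:ℝ)+1)+1) := by
        have hj' : (j:ℝ) ≤ (m:ℝ) := by exact_mod_cast hjm
        have hm' : (m:ℝ) ≤ (j:ℝ) + 1 := by exact_mod_cast hmj
        nlinarith
      have hpow : ((1/2:ℝ))^(2*(m+1)) = 1/((2:ℝ)^(m+1))^2 := by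
        rw [div_pow, one_pow, ← pow_mul]
        rw [Nat.mul_comm]
      have hX : (2*(j:ℝ)+1)/(2*((m:ℝ)+1)+1) ≤ ((2*(j:ℝ)+1))^2/(((m:ℝ)+1))^2 := by
        rw [div_le_div_iff₀ (by positivity) (by positivity)]
        nlinarith [hineq]
      have hpos : (0:ℝ) ≤ (B * h^(m+1))^2 / ((m.factorial:ℝ)^2*((2:ℝ)^(m+1))^2) := by positivity
      have hw : ((2:ℝ)^(m+1)) ≠ 0 := by positivity
      have hMr : ((m:ℝ)+1) ≠ 0 := by positivity
      rw [hRHS, hfacm, hpow]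
      calc (2*(j:ℝ)+1) * ((B * h^(m+1) / m.factorial)^2 * ((1/((2:ℝ)^(m+1))^2) / (2*((m:ℝ)+1)+1)))
          = ((B * h^(m+1))^2 / ((m.factorial:ℝ)^2*((2:ℝ)^(m+1))^2)) * ((2*(j:ℝ)+1)/(2*((m:ℝ)+1)+1)) := by
            rw [div_pow]
            ring
        _ ≤ ((B * h^(m+1))^2 / ((m.factorial:ℝ)^2*((2:ℝ)^(m+1))^2)) * (((2*(j:ℝ)+1))^2/(((m:ℝ)+1))^2) := mul_le_mul_of_nonneg_left hX hpos
        _ = (h ^ (m+1) * (2 * (j:ℝ) + 1) / (2 ^ (m+1) * (((m:ℝ)+1) * (m.factorial:ℝ))) * B)^2 := by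
            field_simp
    calc ((2*(j:ℝ)+1) * |E|)^2 = (2*(j:ℝ)+1) * ((2*(j:ℝ)+1) * E^2) := e1
      _ ≤ (2*(j:ℝ)+1) * ∫ s in (0:ℝ)..1, (R s)^2 := by
          apply mul_le_mul_of_nonneg_left hCS (by positivity)
      _ ≤ (2*(j:ℝ)+1) * ((B * h^(m+1) / m.factorial)^2 * (((1/2:ℝ))^(2*(m+1)) / (2*((m:ℝ)+1)+1))) := by
          apply mul_le_mul_of_nonneg_left hR2 (by positivity)
      _ ≤ RHS^2 := hkey
  have habs : |(2*(j:ℝ)+1) * E| = (2*(j:ℝ)+1) * |E| := by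
    rw [abs_mul, abs_of_pos (by positivity : (0:ℝ) < 2*(j:ℝ)+1)]
  rw [habs]
  have hsqrt := Real.sqrt_le_sqrt hsq
  rw [Real.sqrt_sq (by positivity), Real.sqrt_sq hRHS0] at hsqrt
  exact hsqrt
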